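/- The monoid M = {(i,j) ∈ N² : i ≤ √2 · j} is not finitely generated as a submonoid of Z². -/

import Mathlib

/-- The monoid M = {(i,j) ∈ ℕ² : i ≤ √2·j}, viewed inside ℤ². -/
def Msqrt2 : Set (ℤ × ℤ) :=
  {p | 0 ≤ p.1 ∧ 0 ≤ p.2 ∧ (p.1 : ℝ) ≤ Real.sqrt 2 * (p.2 : ℝ)}

lemma Msqrt2_gap_pos {a : ℤ × ℤ} (ha : a ∈ Msqrt2) (h0 : a ≠ 0) :
    0 < (a.2 : ℝ) ∧ 0 < Real.sqrt 2 * (a.2 : ℝ) - (a.1 : ℝ) := by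
  obtain ⟨h1, h2, h3⟩ := ha
  have h2' : 0 < a.2 := by
    rcases h2.lt_or_eq with h | h
    · exact h
    · exfalso
      apply h0
      have : (a.1 : ℝ) ≤ 0 := by rw [← h] at h3; simpa using h3
      have ha1 : a.1 = 0 := le_antisymm (by exact_mod_cast this) h1
      exact Prod.ext ha1 h.symm
  have h2r : (0 : ℝ) < (a.2 : ℝ) := by exact_mod_cast h2'
  refine ⟨h2r, ?_⟩
  rcases h3.lt_or_eq with h | h
  · linarith
  · exfalso
    have hq : Real.sqrt 2 = (((a.1 : ℚ) / (a.2 : ℚ) : ℚ) : ℝ) := by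
      push_cast
      field_simp
      linarith [h]
    exact (hq ▸ irrational_sqrt_two) ⟨_, rfl⟩
lemma exists_eps (A : Finset (ℤ × ℤ)) (hA : (A : Set (ℤ × ℤ)) ⊆ Msqrt2) :
    ∃ ε > (0:ℝ), ∀ a ∈ A, ε * (a.2 : ℝ) ≤ Real.sqrt 2 * (a.2 : ℝ) - (a.1 : ℝ) := by
  classical
  induction A using Finset.induction_on with
  | empty => exact ⟨1, one_pos, by simp⟩
  | @insert a s _ ih =>
    have hs : (s : Set (ℤ × ℤ)) ⊆ Msqrt2 := by
      intro x hx; exact hA (by simpa using Or.inr hx)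
    obtain ⟨ε, hε, hεs⟩ := ih hs
    have ha : a ∈ Msqrt2 := hA (by simp)
    by_cases h0 : a = 0
    · refine ⟨ε, hε, ?_⟩
      intro b hb
      rcases Finset.mem_insert.mp hb with rfl | hb
      · subst h0; simp
      · exact hεs b hb
    · obtain ⟨hpos, hgap⟩ := Msqrt2_gap_pos ha h0
      refine ⟨min ε ((Real.sqrt 2 * (a.2 : ℝ) - (a.1 : ℝ)) / (a.2 : ℝ)),
        lt_min hε (div_pos hgap hpos), ?_⟩
      intro b hb
      rcases Finset.mem_insert.mp hb with rfl | hb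
      · calc min ε ((Real.sqrt 2 * (b.2 : ℝ) - (b.1 : ℝ)) / (b.2 : ℝ)) * (b.2 : ℝ)
            ≤ ((Real.sqrt 2 * (b.2 : ℝ) - (b.1 : ℝ)) / (b.2 : ℝ)) * (b.2 : ℝ) := by
              apply mul_le_mul_of_nonneg_right (min_le_right _ _) (le_of_lt hpos)
          _ = Real.sqrt 2 * (b.2 : ℝ) - (b.1 : ℝ) := div_mul_cancel₀ _ (ne_of_gt hpos)
      · calc min ε ((Real.sqrt 2 * (a.2 : ℝ) - (a.1 : ℝ)) / (a.2 : ℝ)) * (b.2 : ℝ)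
            ≤ ε * (b.2 : ℝ) := by
              apply mul_le_mul_of_nonneg_right (min_le_left _ _)
              have := (hs hb).2.1
              exact_mod_cast this
          _ ≤ _ := hεs b hb

/-- M is not finitely generated as a submonoid of ℤ²: there is no finite subset
A of M such that every element of M is a finite sum of elements of A. -/
theorem Msqrt2_not_finitely_generated :
    ¬ ∃ A : Finset (ℤ × ℤ), (A : Set (ℤ × ℤ)) ⊆ Msqrt2 ∧
      ∀ m ∈ Msqrt2, m ∈ AddSubmonoid.closure (A : Set (ℤ × ℤ)) := by
  rintro ⟨A, hA, hgen⟩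
  obtain ⟨ε, hε, hεA⟩ := exists_eps A hA
  have hall : ∀ m ∈ AddSubmonoid.closure (A : Set (ℤ × ℤ)),
      ε * (m.2 : ℝ) ≤ Real.sqrt 2 * (m.2 : ℝ) - (m.1 : ℝ) := by
    intro m hm
    induction hm using AddSubmonoid.closure_induction with
    | mem a ha => exact hεA a ha
    | zero => simp
    | add x y _ _ hx hy =>
      simp only [Prod.fst_add, Prod.snd_add]
      push_cast
      linarith
  obtain ⟨n, hn⟩ := exists_nat_gt (1 / ε)
  have hn1 : 1 < ε * (n : ℝ) := by
    rw [div_lt_iff₀ hε] at hn; linarith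
  set i : ℤ := ⌊Real.sqrt 2 * (n : ℝ)⌋ with hi
  have hsqrt : (0:ℝ) ≤ Real.sqrt 2 * (n : ℝ) :=
    mul_nonneg (Real.sqrt_nonneg 2) (Nat.cast_nonneg n)
  have hmem : ((i, (n : ℤ)) : ℤ × ℤ) ∈ Msqrt2 := by
    refine ⟨?_, by positivity, ?_⟩
    · exact_mod_cast Int.le_floor.mpr (by simpa using hsqrt)
    · simpa using Int.floor_le (Real.sqrt 2 * (n : ℝ))
  have h1 := hall _ (hgen _ hmem)
  have h2 : Real.sqrt 2 * (n : ℝ) < (i : ℝ) + 1 := Int.lt_floor_add_one _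
  simp only at h1
  push_cast at h1
  linarith
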